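/- In a hyperpath H' from s to d (with s ≠ d), there is exactly one edge e in H' such that d ∈ H(e). -/

import Mathlib

/-- A directed hypergraph: finite vertex set, finite set of hyperedges,
each hyperedge `e = (T_e, H_e)` with tail `T_e ⊆ V`, head `H_e ⊆ V \ T_e`. -/
structure DiHypergraph (V : Type*) [DecidableEq V] where
  verts : Finset V
  edges : Finset (Finset V × Finset V)
  tail_sub : ∀ e ∈ edges, e.1 ⊆ verts
  head_sub : ∀ e ∈ edges, e.2 ⊆ verts
  disj : ∀ e ∈ edges, Disjoint e.1 e.2

variable {V : Type*} [DecidableEq V]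

/-- Subhypergraph relation. -/
def Subhg (H' H : DiHypergraph V) : Prop :=
  H'.verts ⊆ H.verts ∧ H'.edges ⊆ H.edges

/-- Union of the heads of a list of hyperedges. -/
def headsUnion (L : List (Finset V × Finset V)) : Finset V :=
  L.foldr (fun e acc => e.2 ∪ acc) ∅

/-- The hyperedges of `H'` can be ordered `⟨e_1, …, e_k⟩` so that
`T(e_i) ⊆ {s} ∪ H(e_1) ∪ ⋯ ∪ H(e_{i-1})` and `d ∈ H(e_k)`. -/
def HasOrdering (H' : DiHypergraph V) (s d : V) : Prop :=
  ∃ L : List (Finset V × Finset V), L.Nodup ∧ L.toFinset = H'.edges ∧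
    (∀ i : Fin L.length, (L.get i).1 ⊆ insert s (headsUnion (L.take (i : ℕ)))) ∧
    ∃ e, L.getLast? = some e ∧ d ∈ e.2

/-- A hyperpath from `s` to `d` in `H` is a subhypergraph of `H`, minimal with
respect to deletion of vertices and edges, admitting a valid edge ordering. -/
def IsHyperpath (H : DiHypergraph V) (s d : V) (H' : DiHypergraph V) : Prop :=
  Subhg H' H ∧ HasOrdering H' s d ∧
    ∀ H'' : DiHypergraph V, Subhg H'' H' → HasOrdering H'' s d → H'' = H'

/-- `PathFrom H s d vs es` : `vs` and `es` form a (simple graph-style) path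
`(v₁ = s, e₁, v₂, …, e_q, v_{q+1} = d)` with `vᵢ ∈ T(eᵢ)`, `v_{i+1} ∈ H(eᵢ)`,
all edges taken from `H`. -/
inductive PathFrom (H : DiHypergraph V) : V → V → List V → List (Finset V × Finset V) → Prop
  | single {s d : V} {e : Finset V × Finset V} :
      e ∈ H.edges → s ∈ e.1 → d ∈ e.2 → PathFrom H s d [s, d] [e]
  | cons {s v d : V} {vs : List V} {es : List (Finset V × Finset V)}
      {e : Finset V × Finset V} :
      e ∈ H.edges → s ∈ e.1 → v ∈ e.2 → PathFrom H v d vs es →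
      PathFrom H s d (s :: vs) (e :: es)

/-- In a hyperpath `H'` from `s` to `d` (with `s ≠ d`), there is exactly one
edge `e` in `H'` such that `d ∈ H(e)`. -/
theorem hyperpath_unique_last_edge (H H' : DiHypergraph V) (s d : V) (hsd : s ≠ d)
    (hp : IsHyperpath H s d H') :
    ∃! e : Finset V × Finset V, e ∈ H'.edges ∧ d ∈ e.2 := by
  obtain ⟨hsub, ⟨L, hnd, hLe, hord, elast, hlast, hdlast⟩, hmin⟩ := hp
  -- Key: any index whose edge head contains `d` must be the last index.
  have key : ∀ (i : ℕ) (hi : i < L.length), d ∈ (L.get ⟨i, hi⟩).2 → i + 1 = L.length := by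
    intro i hi hdi
    set L' := L.take (i + 1) with hL'
    have hsubl : List.Sublist L' L := List.take_sublist _ _
    have hnd' : L'.Nodup := hnd.sublist hsubl
    have hlen' : L'.length = i + 1 := by
      simp [hL', List.length_take, Nat.min_eq_left (Nat.succ_le_of_lt hi)]
    have hsubF : L'.toFinset ⊆ L.toFinset := fun x hx =>
      List.mem_toFinset.2 (hsubl.mem (List.mem_toFinset.1 hx))
    have hmemE : ∀ x ∈ L'.toFinset, x ∈ H'.edges := fun x hx => hLe ▸ hsubF hx
    set H'' : DiHypergraph V :=
      ⟨H'.verts, L'.toFinset,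
        fun e he => H'.tail_sub e (hmemE e he),
        fun e he => H'.head_sub e (hmemE e he),
        fun e he => H'.disj e (hmemE e he)⟩ with hH''
    have hordering : HasOrdering H'' s d := by
      refine ⟨L', hnd', rfl, ?_, L.get ⟨i, hi⟩, ?_, hdi⟩
      · intro j
        have hjlt : (j : ℕ) < L.length := by
          have := j.isLt
          simp only [hL', List.length_take, lt_min_iff] at this
          exact this.2
        have hget : L'.get j = L.get ⟨(j : ℕ), hjlt⟩ := by
          simp [hL', List.getElem_take]
        have htake : L'.take (j : ℕ) = L.take (j : ℕ) := by
          have hj1 : (j : ℕ) ≤ i + 1 := by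
            have := j.isLt; omega
          simp [hL', List.take_take, Nat.min_eq_left hj1]
        rw [hget, htake]
        exact hord ⟨(j : ℕ), hjlt⟩
      · rw [List.getLast?_eq_getElem?, hlen']
        simp only [Nat.add_sub_cancel]
        rw [List.getElem?_eq_getElem (by omega : i < L'.length)]
        simp [hL', List.getElem_take]
    have heq : H'' = H' := hmin H'' ⟨subset_rfl, fun x hx => hLe ▸ hsubF hx⟩ hordering
    have hedges : L'.toFinset = L.toFinset := by
      have := congrArg DiHypergraph.edges heq
      simpa [hH'', hLe] using this
    have hcard : L'.length = L.length := by
      rw [← List.toFinset_card_of_nodup hnd', ← List.toFinset_card_of_nodup hnd, hedges]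
    omega
  -- The last edge exists and contains `d`.
  have hLne : L ≠ [] := by
    intro h; rw [h] at hlast; simp at hlast
  have hlen0 : 0 < L.length := List.length_pos_iff.2 hLne
  have hlastget : elast = L.get ⟨L.length - 1, by omega⟩ := by
    rw [List.getLast?_eq_getElem?, List.getElem?_eq_getElem (by omega)] at hlast
    exact (Option.some.injEq _ _ ▸ hlast).symm
  refine ⟨elast, ⟨?_, hdlast⟩, ?_⟩
  · rw [← hLe, List.mem_toFinset]
    exact List.mem_of_getLast? hlast
  · rintro f ⟨hfE, hfd⟩
    rw [← hLe, List.mem_toFinset] at hfE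
    obtain ⟨⟨j, hj⟩, hjf⟩ := List.mem_iff_get.1 hfE
    have := key j hj (by rw [hjf]; exact hfd)
    have hje : (⟨j, hj⟩ : Fin L.length) = ⟨L.length - 1, by omega⟩ := Fin.ext (by simp; omega)
    rw [← hjf, hlastget, hje]
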